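/- Let n ≥ 2 be an integer and p ≥ 7 a prime with p ≡ 1 (mod 2n). Then, in ℚ_p, ∑_{k=0}^{p-1} (1/n)_k^4 · ((2n-3)/(2n))_k / ( (5/(2n))_k · (k!)^4 ) ≡ ∑_{k=0}^{(p-1)/n} (1/n)_k^4 · ((2n-3)/(2n))_k / ( (5/(2n))_k · (k!)^4 ) (mod p^4), i.e. the difference of the two truncated sums lies in p^4 ℤ_p. -/

import Mathlib

open Finset

/-- Rising factorial (Pochhammer symbol) `(a)_k = a(a+1)⋯(a+k-1)` in `ℚ_p`. -/
noncomputable def rf {p : ℕ} [Fact p.Prime] (a : ℚ_[p]) (k : ℕ) : ℚ_[p] :=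
  ∏ j ∈ Finset.range k, (a + (j : ℚ_[p]))

section helpers
variable {p : ℕ} [hp : Fact p.Prime]

lemma norm_nat_unit {N : ℕ} (h : ¬ p ∣ N) : ‖(N : ℚ_[p])‖ = 1 := by
  have h1 : ‖((N : ℤ) : ℚ_[p])‖ ≤ 1 := Padic.norm_int_le_one _
  have h2 : ¬ ‖((N : ℤ) : ℚ_[p])‖ < 1 := by
    rw [Padic.norm_intCast_lt_one_iff]
    exact_mod_cast h
  push_cast at h1 h2
  linarith [lt_or_eq_of_le h1, h2]

lemma norm_nat_p {N w : ℕ} (h : N = p * w) (hw : ¬ p ∣ w) : ‖(N : ℚ_[p])‖ = (p : ℝ)⁻¹ := by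
  subst h
  push_cast
  rw [norm_mul, Padic.norm_p, norm_nat_unit hw, mul_one]

lemma not_dvd_shift {u v j j0 : ℕ} (hv : ¬ p ∣ v) (hj : j < p) (hj0 : j0 < p)
    (h0 : p ∣ u + v * j0) (hne : j ≠ j0) : ¬ p ∣ u + v * j := by
  haveI : NeZero p := ⟨hp.out.ne_zero⟩
  intro h
  have h0' : ((u : ZMod p) + v * j0) = 0 := by
    have := (ZMod.natCast_eq_zero_iff _ _).mpr h0
    push_cast at this; exact this
  have h' : ((u : ZMod p) + v * j) = 0 := by
    have := (ZMod.natCast_eq_zero_iff _ _).mpr h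
    push_cast at this; exact this
  have hv' : (v : ZMod p) ≠ 0 := fun hc => hv ((ZMod.natCast_eq_zero_iff _ _).mp hc)
  have hjj : (j : ZMod p) = (j0 : ZMod p) := by
    have : (v : ZMod p) * j = v * j0 := by
      have := h'.trans h0'.symm
      linear_combination this
    exact mul_left_cancel₀ hv' this
  apply hne
  have := congrArg ZMod.val hjj
  rwa [ZMod.val_cast_of_lt hj, ZMod.val_cast_of_lt hj0] at this

lemma norm_rf_eq {x : ℚ_[p]} {u v j0 w : ℕ}
    (hx : ∀ j : ℕ, x + (j : ℚ_[p]) = ((u + v * j : ℕ) : ℚ_[p]) / ((v : ℕ) : ℚ_[p]))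
    (hv : ¬ p ∣ v) (hw : ¬ p ∣ w) (h0 : u + v * j0 = p * w) (hj0 : j0 < p)
    {k : ℕ} (hk : k ≤ p) :
    ‖rf x k‖ = if j0 < k then ((p : ℝ))⁻¹ else 1 := by
  have hfac : ∀ j : ℕ, j < p → j ≠ j0 → ‖x + (j : ℚ_[p])‖ = 1 := by
    intro j hj hne
    rw [hx j, norm_div, norm_nat_unit (not_dvd_shift hv hj hj0 ⟨w, h0⟩ hne),
      norm_nat_unit hv, div_one]
  have hfac0 : ‖x + (j0 : ℚ_[p])‖ = (p : ℝ)⁻¹ := by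
    rw [hx j0, norm_div, norm_nat_p h0 hw, norm_nat_unit hv, div_one]
  unfold rf
  rw [norm_prod]
  split
  case isTrue h =>
    rw [Finset.prod_eq_single j0]
    · exact hfac0
    · intro b hb hbne
      exact hfac b (lt_of_lt_of_le (mem_range.mp hb) hk) hbne
    · intro hmem; exact absurd (mem_range.mpr h) hmem
  case isFalse h =>
    apply Finset.prod_eq_one
    intro j hjk
    have hjk' := mem_range.mp hjk
    exact hfac j (lt_of_lt_of_le hjk' hk) (by omega)

lemma rf_split (x : ℚ_[p]) (k L : ℕ) :
    rf x (k + L) = rf x k * ∏ i ∈ range L, (x + ((k + i : ℕ) : ℚ_[p])) := by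
  unfold rf
  rw [Finset.prod_range_add]

lemma fact_split (k L : ℕ) :
    (k + L).factorial = k.factorial * ∏ i ∈ range L, (k + 1 + i) := by
  induction L with
  | zero => simp
  | succ L ih =>
    rw [prod_range_succ, ← mul_assoc, ← ih, ← Nat.add_assoc, Nat.factorial_succ]
    ring

lemma rf_ne_zero {x : ℚ_[p]} {u v : ℕ}
    (hx : ∀ j : ℕ, x + (j : ℚ_[p]) = ((u + v * j : ℕ) : ℚ_[p]) / ((v : ℕ) : ℚ_[p]))
    (hu : 0 < u) (hv : v ≠ 0) (k : ℕ) : rf x k ≠ 0 := by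
  unfold rf
  apply Finset.prod_ne_zero_iff.mpr
  intro j _
  rw [hx j]
  apply div_ne_zero
  · exact (Nat.cast_ne_zero (R := ℚ_[p])).mpr (by omega)
  · exact (Nat.cast_ne_zero (R := ℚ_[p])).mpr hv

end helpers

section main
variable {p n M : ℕ} [hp : Fact p.Prime]

noncomputable def tt (n : ℕ) {p : ℕ} [Fact p.Prime] (k : ℕ) : ℚ_[p] :=
  rf (1 / (n : ℚ_[p])) k ^ 4 *
    rf ((2 * (n : ℚ_[p]) - 3) / (2 * (n : ℚ_[p]))) k /
    (rf (5 / (2 * (n : ℚ_[p]))) k * (k.factorial : ℚ_[p]) ^ 4)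

lemma hx_a (hn : 1 ≤ n) (hnp : n < p) :
    ∀ j : ℕ, (1 / (n : ℚ_[p])) + (j : ℚ_[p]) = ((1 + n * j : ℕ) : ℚ_[p]) / ((n : ℕ) : ℚ_[p]) := by
  intro j
  have hn0 : ((n : ℕ) : ℚ_[p]) ≠ 0 := Nat.cast_ne_zero.mpr (by omega)
  push_cast
  push_cast at hn0
  field_simp

lemma hx_b (hn : 2 ≤ n) :
    ∀ j : ℕ, ((2 * (n : ℚ_[p]) - 3) / (2 * (n : ℚ_[p]))) + (j : ℚ_[p]) =
      (((2 * n - 3) + 2 * n * j : ℕ) : ℚ_[p]) / ((2 * n : ℕ) : ℚ_[p]) := by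
  intro j
  have hn0 : ((n : ℕ) : ℚ_[p]) ≠ 0 := Nat.cast_ne_zero.mpr (by omega)
  have h3 : 3 ≤ 2 * n := by omega
  push_cast [Nat.cast_sub h3]
  push_cast at hn0
  have h2n : 2 * (n : ℚ_[p]) ≠ 0 := by
    simp [hn0]
  field_simp

lemma hx_c (hn : 1 ≤ n) :
    ∀ j : ℕ, (5 / (2 * (n : ℚ_[p]))) + (j : ℚ_[p]) =
      ((5 + 2 * n * j : ℕ) : ℚ_[p]) / ((2 * n : ℕ) : ℚ_[p]) := by
  intro j
  have hn0 : ((n : ℕ) : ℚ_[p]) ≠ 0 := Nat.cast_ne_zero.mpr (by omega)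
  push_cast
  push_cast at hn0
  have h2n : 2 * (n : ℚ_[p]) ≠ 0 := by simp [hn0]
  field_simp

lemma norm_tt_le (hP : p = 2 * n * M + 1) (hn : 2 ≤ n) (hM : 1 ≤ M) (hp7 : 7 ≤ p)
    {k : ℕ} (h2 : 2 * M < k) (hkp : k < p)
    (hgood : k ≤ 5 * M ∨ (2 * n - 3) * M < k) :
    ‖(tt n k : ℚ_[p])‖ ≤ ((p : ℝ)⁻¹) ^ 4 := by
  obtain ⟨w, hw', hP'⟩ : ∃ w, w = n * M ∧ p = 2 * w + 1 := ⟨n * M, rfl, by rw [hP]; ring⟩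
  have hw2 : 2 * M ≤ w := by rw [hw']; exact Nat.mul_le_mul_right M hn
  have hwn : n ≤ w := by rw [hw']; exact Nat.le_mul_of_pos_right n hM
  have hnp : n < p := by omega
  have hdn : ¬ p ∣ n := fun h => by have := Nat.le_of_dvd (by omega) h; omega
  have hd2n : ¬ p ∣ 2 * n := fun h => by have := Nat.le_of_dvd (by omega) h; omega
  have hd1 : ¬ p ∣ 1 := fun h => by have := Nat.le_of_dvd (by omega) h; omega
  have hd5 : ¬ p ∣ 5 := fun h => by have := Nat.le_of_dvd (by omega) h; omega
  -- u = 2n - 3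
  obtain ⟨u, hu⟩ : ∃ u, u + 3 = 2 * n := ⟨2 * n - 3, by omega⟩
  have hu' : 2 * n - 3 = u := by omega
  have huM : u * M + 3 * M = 2 * w := by
    calc u * M + 3 * M = (u + 3) * M := by ring
    _ = 2 * n * M := by rw [hu]
    _ = 2 * w := by rw [hw']; ring
  have hdu : ¬ p ∣ u := fun h => by have := Nat.le_of_dvd (by omega) h; omega
  -- norms of the three rf's
  have ha : ‖rf (1 / (n : ℚ_[p])) k‖ = if 2 * M < k then ((p : ℝ))⁻¹ else 1 :=
    norm_rf_eq (hx_a (by omega) hnp) hdn hd1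
      (by rw [hP]; ring) (by omega) (le_of_lt hkp)
  have hb : ‖rf ((2 * (n : ℚ_[p]) - 3) / (2 * (n : ℚ_[p]))) k‖
      = if u * M < k then ((p : ℝ))⁻¹ else 1 := by
    refine norm_rf_eq (u := 2 * n - 3) (hx_b hn) hd2n (hu' ▸ hdu) ?_ (by omega) (le_of_lt hkp)
    rw [hu', hP]
    calc u + 2 * n * (u * M) = u * (2 * n * M + 1) := by ring
    _ = (2 * n * M + 1) * u := by ring
  have hfact : ‖((k.factorial : ℕ) : ℚ_[p])‖ = 1 := by
    apply norm_nat_unit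
    rw [Nat.Prime.dvd_factorial hp.out]
    omega
  have hq0 : (0 : ℝ) < (p : ℝ)⁻¹ := by
    have : (0 : ℝ) < (p : ℝ) := by positivity
    positivity
  have hq1 : (p : ℝ)⁻¹ ≤ 1 := by
    rw [inv_le_one_iff₀]
    right; exact_mod_cast Nat.one_le_iff_ne_zero.mpr (by omega)
  by_cases h5p : 5 * M < p
  · -- j2 = 5M
    have hc : ‖rf (5 / (2 * (n : ℚ_[p]))) k‖ = if 5 * M < k then ((p : ℝ))⁻¹ else 1 :=
      norm_rf_eq (hx_c (by omega)) hd2n hd5 (by rw [hP]; ring) h5p (le_of_lt hkp)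
    unfold tt
    simp only [norm_div, norm_mul, norm_pow]
    rw [ha, hb, hc, hfact, if_pos h2, one_pow, mul_one]
    by_cases hck : 5 * M < k
    · have hbk : u * M < k := by
        rcases hgood with h | h
        · omega
        · rw [hu'] at h; omega
      rw [if_pos hck, if_pos hbk]
      apply le_of_eq
      field_simp
    · rw [if_neg hck, div_one]
      have hite : (if u * M < k then ((p:ℝ))⁻¹ else 1) ≤ 1 := by
        split
        · exact hq1
        · exact le_refl 1
      nlinarith [pow_pos hq0 4]
  · -- n = 2 case, j2 = M - 1
    have hn2 : n = 2 := by
      by_contra hne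
      have h3n : 3 ≤ n := by omega
      have : 3 * M ≤ w := by rw [hw']; exact Nat.mul_le_mul_right M h3n
      omega
    subst hn2
    have hw2' : w = 2 * M := hw'
    have hc : ‖rf (5 / (2 * ((2:ℕ) : ℚ_[p]))) k‖ = if M - 1 < k then ((p : ℝ))⁻¹ else 1 :=
      norm_rf_eq (p := p) (hx_c (n := 2) (by omega)) hd2n hd1
        (j0 := M - 1) (by omega) (by omega) (le_of_lt hkp)
    have hbk : u * M < k := by omega
    have hck : M - 1 < k := by omega
    unfold tt
    simp only [norm_div, norm_mul, norm_pow]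
    rw [ha, hb, hc, hfact, if_pos h2, one_pow, if_pos hck, if_pos hbk]
    apply le_of_eq
    field_simp

end main

section pair
variable {p n M : ℕ} [hp : Fact p.Prime]

lemma alg_id {K : Type*} [Field K] (x y z f A B C D N T : K) (hz : z ≠ 0) (hf : f ≠ 0)
    (hN : N ≠ 0) (hT : T ≠ 0) (hC : C ≠ 0) (hD : D ≠ 0) :
    x ^ 4 * y / (z * f ^ 4) + (x * (A / N)) ^ 4 * (y * (B / T)) / ((z * (C / T)) * (f * D) ^ 4)
      = x ^ 4 * y * (A ^ 4 * B + N ^ 4 * (C * D ^ 4)) / (z * f ^ 4 * (N ^ 4 * (C * D ^ 4))) := by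
  have hd1 : z * f ^ 4 ≠ 0 := mul_ne_zero hz (pow_ne_zero _ hf)
  have hd2 : (z * (C / T)) * (f * D) ^ 4 ≠ 0 :=
    mul_ne_zero (mul_ne_zero hz (div_ne_zero hC hT)) (pow_ne_zero _ (mul_ne_zero hf hD))
  have hd3 : z * f ^ 4 * (N ^ 4 * (C * D ^ 4)) ≠ 0 :=
    mul_ne_zero hd1 (mul_ne_zero (pow_ne_zero _ hN) (mul_ne_zero hC (pow_ne_zero _ hD)))
  rw [div_add_div _ _ hd1 hd2, div_eq_div_iff (mul_ne_zero hd1 hd2) hd3]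
  field_simp
  ring

set_option maxHeartbeats 2000000 in
lemma pair_bound (hP : p = 2 * n * M + 1) (hn : 2 ≤ n) (hM : 1 ≤ M) (hp7 : 7 ≤ p)
    {k : ℕ} (hk5 : 5 * M < k) (hkmid : 2 * k < p + 2 * M) (hkb : k ≤ (2 * n - 3) * M) :
    ‖(tt n k + tt n (p + 2 * M - k) : ℚ_[p])‖ ≤ ((p : ℝ)⁻¹) ^ 4 := by
  obtain ⟨w, hw', hP'⟩ : ∃ w, w = n * M ∧ p = 2 * w + 1 := ⟨n * M, rfl, by rw [hP]; ring⟩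
  have hw2 : 2 * M ≤ w := by rw [hw']; exact Nat.mul_le_mul_right M hn
  have hwn : n ≤ w := by rw [hw']; exact Nat.le_mul_of_pos_right n hM
  have hdn : ¬ p ∣ n := fun h => by have := Nat.le_of_dvd (by omega) h; omega
  have hd2n : ¬ p ∣ 2 * n := fun h => by have := Nat.le_of_dvd (by omega) h; omega
  have hd1 : ¬ p ∣ 1 := fun h => by have := Nat.le_of_dvd (by omega) h; omega
  have hd5 : ¬ p ∣ 5 := fun h => by have := Nat.le_of_dvd (by omega) h; omega
  obtain ⟨u, hu⟩ : ∃ u, u + 3 = 2 * n := ⟨2 * n - 3, by omega⟩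
  have hu' : 2 * n - 3 = u := by omega
  have huM : u * M + 3 * M = 2 * w := by
    calc u * M + 3 * M = (u + 3) * M := by ring
    _ = 2 * n * M := by rw [hu]
    _ = 2 * w := by rw [hw']; ring
  have hkuM : k ≤ u * M := by rwa [hu'] at hkb
  have hkp : k < p := by omega
  have h5Mp : 5 * M < p := by omega
  obtain ⟨L, hL⟩ : ∃ L, L = p + 2 * M - 2 * k := ⟨_, rfl⟩
  have hL1 : 1 ≤ L := by omega
  have hsk : p + 2 * M - k = k + L := by omega
  have hodd : Odd L := ⟨w + M - k, by omega⟩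
  -- the natural number products
  obtain ⟨Abar, hAbar⟩ : ∃ A, A = ∏ i ∈ range L, (1 + n * (k + i)) := ⟨_, rfl⟩
  obtain ⟨Bbar, hBbar⟩ : ∃ B, B = ∏ i ∈ range L, (u + 2 * n * (k + i)) := ⟨_, rfl⟩
  obtain ⟨Cbar, hCbar⟩ : ∃ C, C = ∏ i ∈ range L, (5 + 2 * n * (k + i)) := ⟨_, rfl⟩
  obtain ⟨Dbar, hDbar⟩ : ∃ D, D = ∏ i ∈ range L, (k + 1 + i) := ⟨_, rfl⟩
  obtain ⟨E, hE⟩ : ∃ E, E = Abar ^ 4 * Bbar + n ^ (4 * L) * Cbar * Dbar ^ 4 := ⟨_, rfl⟩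
  -- key congruence
  haveI : NeZero p := ⟨hp.out.ne_zero⟩
  have hA : (Abar : ZMod p) = (-(n : ZMod p)) ^ L * (Dbar : ZMod p) := by
    rw [hAbar, hDbar]
    push_cast
    calc ∏ i ∈ range L, (1 + (n : ZMod p) * ((k : ZMod p) + i))
        = ∏ i ∈ range L, (-(n : ZMod p) * ((k : ZMod p) + 1 + (L - 1 - i : ℕ))) := by
          apply Finset.prod_congr rfl
          intro i hi
          have hiL : i < L := mem_range.mp hi
          have key : (1 + n * (k + i)) + n * (k + 1 + (L - 1 - i)) = p * (n + 1) := by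
            have h1 : (k + i) + (k + 1 + (L - 1 - i)) = p + 2 * M := by omega
            calc (1 + n * (k + i)) + n * (k + 1 + (L - 1 - i))
                = 1 + n * ((k + i) + (k + 1 + (L - 1 - i))) := by ring
            _ = 1 + n * (p + 2 * M) := by rw [h1]
            _ = p * (n + 1) := by rw [hP]; ring
          have key2 : (((1 + n * (k + i)) + n * (k + 1 + (L - 1 - i)) : ℕ) : ZMod p) = 0 := by
            rw [key]; push_cast; simp
          push_cast at key2
          linear_combination key2
    _ = ∏ i ∈ range L, (-(n : ZMod p) * ((k : ZMod p) + 1 + (i : ℕ))) := by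
          exact Finset.prod_range_reflect (fun i => -(n : ZMod p) * ((k : ZMod p) + 1 + (i : ℕ))) L
    _ = (-(n : ZMod p)) ^ L * ∏ i ∈ range L, ((k : ZMod p) + 1 + i) := by
          rw [Finset.prod_mul_distrib, Finset.prod_const, Finset.card_range]
  have hB : (Bbar : ZMod p) = (-1 : ZMod p) ^ L * (Cbar : ZMod p) := by
    rw [hBbar, hCbar]
    push_cast
    calc ∏ i ∈ range L, ((u : ZMod p) + 2 * n * ((k : ZMod p) + i))
        = ∏ i ∈ range L, (-1 * (5 + 2 * (n : ZMod p) * ((k : ZMod p) + (L - 1 - i : ℕ)))) := by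
          apply Finset.prod_congr rfl
          intro i hi
          have hiL : i < L := mem_range.mp hi
          have key : (u + 2 * n * (k + i)) + (5 + 2 * n * (k + (L - 1 - i))) = p * (2 * n + 2) := by
            have h1 : (k + i) + (k + (L - 1 - i)) = 2 * n * M + 2 * M := by omega
            calc (u + 2 * n * (k + i)) + (5 + 2 * n * (k + (L - 1 - i)))
                = (u + 3) + 2 + 2 * n * ((k + i) + (k + (L - 1 - i))) := by ring
            _ = 2 * n + 2 + 2 * n * (2 * n * M + 2 * M) := by rw [hu, h1]
            _ = (2 * n * M + 1) * (2 * n + 2) := by ring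
            _ = p * (2 * n + 2) := by rw [hP]
          have key2 : (((u + 2 * n * (k + i)) + (5 + 2 * n * (k + (L - 1 - i))) : ℕ) : ZMod p) = 0 := by
            rw [key]; push_cast; simp
          push_cast at key2
          linear_combination key2
    _ = ∏ i ∈ range L, (-1 * (5 + 2 * (n : ZMod p) * ((k : ZMod p) + (i : ℕ)))) := by
          exact Finset.prod_range_reflect (fun i => -1 * (5 + 2 * (n : ZMod p) * ((k : ZMod p) + (i : ℕ)))) L
    _ = (-1 : ZMod p) ^ L * ∏ i ∈ range L, (5 + 2 * (n : ZMod p) * ((k : ZMod p) + i)) := by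
          rw [Finset.prod_mul_distrib, Finset.prod_const, Finset.card_range]
  have hEdvd : p ∣ E := by
    rw [← ZMod.natCast_eq_zero_iff]
    rw [hE]
    push_cast
    rw [hA, hB, hodd.neg_one_pow]
    have h4 : ((-(n : ZMod p)) ^ L) ^ 4 = ((n : ZMod p) ^ 4) ^ L := by
      rw [← pow_mul, Even.neg_pow ⟨L * 2, by ring⟩, pow_mul']
    rw [mul_pow, h4, show (n : ZMod p) ^ (4 * L) = ((n : ZMod p) ^ 4) ^ L by rw [pow_mul]]
    ring
  -- norm of E
  have hp0R : (0:ℝ) < (p:ℝ) := by exact_mod_cast hp.out.pos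
  have hq0 : (0:ℝ) < (p:ℝ)⁻¹ := by positivity
  have hEnorm : ‖((E : ℕ) : ℚ_[p])‖ ≤ (p:ℝ)⁻¹ := by
    obtain ⟨e, he⟩ := hEdvd
    rw [he]
    push_cast
    rw [norm_mul, Padic.norm_p]
    have h1 : ‖((e : ℕ) : ℚ_[p])‖ ≤ 1 := by
      have := Padic.norm_int_le_one (p := p) (e : ℤ)
      push_cast at this
      exact this
    nlinarith
  -- divisibility facts for u
  have hdu : ¬ p ∣ u := fun h => by have := Nat.le_of_dvd (by omega) h; omega
  -- factor forms
  have hxa := hx_a (p := p) (n := n) (by omega) (by omega)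
  have hxb := hx_b (p := p) hn
  have hxc := hx_c (p := p) (n := n) (by omega)
  simp only [hu'] at hxb
  -- splitting identities
  have hsa : rf (1 / (n : ℚ_[p])) (k + L)
      = rf (1 / (n : ℚ_[p])) k * ((Abar : ℚ_[p]) / ((n : ℚ_[p])) ^ L) := by
    rw [rf_split]
    congr 1
    calc ∏ i ∈ range L, (1 / (n : ℚ_[p]) + ((k + i : ℕ) : ℚ_[p]))
        = ∏ i ∈ range L, (((1 + n * (k + i) : ℕ) : ℚ_[p]) / ((n : ℕ) : ℚ_[p])) :=
          Finset.prod_congr rfl (fun i _ => hxa (k + i))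
      _ = (∏ i ∈ range L, ((1 + n * (k + i) : ℕ) : ℚ_[p])) / ((n : ℕ) : ℚ_[p]) ^ L := by
          rw [Finset.prod_div_distrib, Finset.prod_const, Finset.card_range]
      _ = (Abar : ℚ_[p]) / ((n : ℚ_[p])) ^ L := by rw [hAbar, Nat.cast_prod]
  have hsb : rf ((2 * (n : ℚ_[p]) - 3) / (2 * (n : ℚ_[p]))) (k + L)
      = rf ((2 * (n : ℚ_[p]) - 3) / (2 * (n : ℚ_[p]))) k * ((Bbar : ℚ_[p]) / ((2 * n : ℕ) : ℚ_[p]) ^ L) := by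
    rw [rf_split]
    congr 1
    calc ∏ i ∈ range L, ((2 * (n : ℚ_[p]) - 3) / (2 * (n : ℚ_[p])) + ((k + i : ℕ) : ℚ_[p]))
        = ∏ i ∈ range L, (((u + 2 * n * (k + i) : ℕ) : ℚ_[p]) / ((2 * n : ℕ) : ℚ_[p])) :=
          Finset.prod_congr rfl (fun i _ => hxb (k + i))
      _ = (∏ i ∈ range L, ((u + 2 * n * (k + i) : ℕ) : ℚ_[p])) / ((2 * n : ℕ) : ℚ_[p]) ^ L := by
          rw [Finset.prod_div_distrib, Finset.prod_const, Finset.card_range]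
      _ = (Bbar : ℚ_[p]) / ((2 * n : ℕ) : ℚ_[p]) ^ L := by rw [hBbar, Nat.cast_prod]
  have hsc : rf (5 / (2 * (n : ℚ_[p]))) (k + L)
      = rf (5 / (2 * (n : ℚ_[p]))) k * ((Cbar : ℚ_[p]) / ((2 * n : ℕ) : ℚ_[p]) ^ L) := by
    rw [rf_split]
    congr 1
    calc ∏ i ∈ range L, (5 / (2 * (n : ℚ_[p])) + ((k + i : ℕ) : ℚ_[p]))
        = ∏ i ∈ range L, (((5 + 2 * n * (k + i) : ℕ) : ℚ_[p]) / ((2 * n : ℕ) : ℚ_[p])) :=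
          Finset.prod_congr rfl (fun i _ => hxc (k + i))
      _ = (∏ i ∈ range L, ((5 + 2 * n * (k + i) : ℕ) : ℚ_[p])) / ((2 * n : ℕ) : ℚ_[p]) ^ L := by
          rw [Finset.prod_div_distrib, Finset.prod_const, Finset.card_range]
      _ = (Cbar : ℚ_[p]) / ((2 * n : ℕ) : ℚ_[p]) ^ L := by rw [hCbar, Nat.cast_prod]
  have hsf : (((k + L).factorial : ℕ) : ℚ_[p]) = (k.factorial : ℚ_[p]) * (Dbar : ℚ_[p]) := by
    rw [fact_split k L, hDbar]
    push_cast
    ring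
  -- nonzeroness
  have hNC : rf (5 / (2 * (n : ℚ_[p]))) k ≠ 0 := rf_ne_zero hxc (by norm_num) (by omega) k
  have hF : ((k.factorial : ℕ) : ℚ_[p]) ≠ 0 := Nat.cast_ne_zero.mpr (Nat.factorial_ne_zero k)
  have hcast_n : ((n : ℕ) : ℚ_[p]) ≠ 0 := Nat.cast_ne_zero.mpr (by omega)
  have hcast_2n : ((2 * n : ℕ) : ℚ_[p]) ≠ 0 := Nat.cast_ne_zero.mpr (by omega)
  have hCpos : 0 < Cbar := by
    rw [hCbar]; exact Finset.prod_pos (fun i _ => by omega)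
  have hDpos : 0 < Dbar := by
    rw [hDbar]; exact Finset.prod_pos (fun i _ => by omega)
  have hCb : ((Cbar : ℕ) : ℚ_[p]) ≠ 0 := Nat.cast_ne_zero.mpr (by omega)
  have hDb : ((Dbar : ℕ) : ℚ_[p]) ≠ 0 := Nat.cast_ne_zero.mpr (by omega)
  -- the algebraic identity
  have hEcast : ((E : ℕ) : ℚ_[p])
      = (Abar : ℚ_[p]) ^ 4 * (Bbar : ℚ_[p])
        + ((n : ℚ_[p]) ^ L) ^ 4 * ((Cbar : ℚ_[p]) * (Dbar : ℚ_[p]) ^ 4) := by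
    rw [hE]
    push_cast
    rw [show (4 : ℕ) * L = L * 4 by ring, pow_mul]
    ring
  have hNL : ((n : ℚ_[p]) ^ L) ≠ 0 := pow_ne_zero _ hcast_n
  have hTL : (((2 * n : ℕ) : ℚ_[p]) ^ L) ≠ 0 := pow_ne_zero _ hcast_2n
  have hiden : (tt n k + tt n (k + L) : ℚ_[p])
      = (rf (1 / (n : ℚ_[p])) k ^ 4 * rf ((2 * (n : ℚ_[p]) - 3) / (2 * (n : ℚ_[p]))) k * ((E : ℕ) : ℚ_[p])) /
        (rf (5 / (2 * (n : ℚ_[p]))) k * ((k.factorial : ℕ) : ℚ_[p]) ^ 4 *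
          (((n : ℚ_[p]) ^ L) ^ 4 * ((Cbar : ℕ) : ℚ_[p]) * ((Dbar : ℕ) : ℚ_[p]) ^ 4)) := by
    unfold tt
    rw [hsa, hsb, hsc, hsf, hEcast]
    rw [alg_id _ _ _ _ _ _ _ _ _ _ hNC hF hNL hTL hCb hDb]
    ring
  -- norms of pieces
  have hb0 : u + 2 * n * (u * M) = p * u := by
    rw [hP]
    calc u + 2 * n * (u * M) = u * (2 * n * M + 1) := by ring
    _ = (2 * n * M + 1) * u := by ring
  have hna : ‖rf (1 / (n : ℚ_[p])) k‖ = (p : ℝ)⁻¹ := by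
    rw [norm_rf_eq (j0 := 2 * M) (w := 1) hxa hdn hd1 (by rw [hP]; ring) (by omega) (le_of_lt hkp),
      if_pos (by omega)]
  have hnb : ‖rf ((2 * (n : ℚ_[p]) - 3) / (2 * (n : ℚ_[p]))) k‖ = 1 := by
    rw [norm_rf_eq (j0 := u * M) (w := u) hxb hd2n hdu hb0 (by omega) (le_of_lt hkp),
      if_neg (by omega)]
  have hnc : ‖rf (5 / (2 * (n : ℚ_[p]))) k‖ = (p : ℝ)⁻¹ := by
    rw [norm_rf_eq (j0 := 5 * M) (w := 5) hxc hd2n hd5 (by rw [hP]; ring) h5Mp (le_of_lt hkp),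
      if_pos hk5]
  have hnf : ‖((k.factorial : ℕ) : ℚ_[p])‖ = 1 := by
    apply norm_nat_unit
    rw [Nat.Prime.dvd_factorial hp.out]
    omega
  have hnn : ‖((n : ℕ) : ℚ_[p])‖ = 1 := norm_nat_unit hdn
  have hnC : ‖((Cbar : ℕ) : ℚ_[p])‖ = 1 := by
    apply norm_nat_unit
    intro hdvd
    rw [hCbar] at hdvd
    obtain ⟨i, hi, hfac⟩ := (Prime.dvd_finset_prod_iff hp.out.prime _).mp hdvd
    have hiL : i < L := mem_range.mp hi
    exact not_dvd_shift (u := 5) (v := 2 * n) hd2n (by omega) h5Mp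
      ⟨5, by rw [hP]; ring⟩ (by omega) hfac
  have hnD : ‖((Dbar : ℕ) : ℚ_[p])‖ = 1 := by
    apply norm_nat_unit
    intro hdvd
    rw [hDbar] at hdvd
    obtain ⟨i, hi, hfac⟩ := (Prime.dvd_finset_prod_iff hp.out.prime _).mp hdvd
    have hiL : i < L := mem_range.mp hi
    have := Nat.le_of_dvd (by omega) hfac
    omega
  rw [hsk, hiden]
  simp only [norm_div, norm_mul, norm_pow]
  rw [hna, hnb, hnc, hnf, hnn, hnC, hnD]
  simp only [one_pow, mul_one]
  rw [div_le_iff₀ (by positivity)]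
  calc ((p:ℝ)⁻¹) ^ 4 * ‖((E : ℕ) : ℚ_[p])‖ ≤ ((p:ℝ)⁻¹) ^ 4 * (p:ℝ)⁻¹ := by
        apply mul_le_mul_of_nonneg_left hEnorm (by positivity)
    _ = ((p:ℝ)⁻¹) ^ 4 * (p:ℝ)⁻¹ := rfl

end pair

set_option maxHeartbeats 1000000 in
/-- For an integer `n ≥ 2` and a prime `p ≥ 7` with `p ≡ 1 (mod 2n)`, in `ℚ_p`,
`∑_{k=0}^{p-1} (1/n)_k⁴ ((2n-3)/(2n))_k / ((5/(2n))_k (k!)⁴)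
≡ ∑_{k=0}^{(p-1)/n} (1/n)_k⁴ ((2n-3)/(2n))_k / ((5/(2n))_k (k!)⁴) (mod p⁴)`,
i.e. the difference of the two truncated sums lies in `p⁴ ℤ_p`. -/
theorem stmt7 (n p : ℕ) [Fact p.Prime] (hn : 2 ≤ n) (hp : 7 ≤ p)
    (hpn : p % (2 * n) = 1) :
    ∃ z : ℤ_[p],
      (∑ k ∈ Finset.range p,
        rf (1 / (n : ℚ_[p])) k ^ 4 *
          rf ((2 * (n : ℚ_[p]) - 3) / (2 * (n : ℚ_[p]))) k /
          (rf (5 / (2 * (n : ℚ_[p]))) k * (k.factorial : ℚ_[p]) ^ 4))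
      - (∑ k ∈ Finset.range ((p - 1) / n + 1),
          rf (1 / (n : ℚ_[p])) k ^ 4 *
            rf ((2 * (n : ℚ_[p]) - 3) / (2 * (n : ℚ_[p]))) k /
            (rf (5 / (2 * (n : ℚ_[p]))) k * (k.factorial : ℚ_[p]) ^ 4))
      = (p : ℚ_[p]) ^ 4 * (z : ℚ_[p]) := by

  have hprime : Fact p.Prime := inferInstance
  obtain ⟨M, hP⟩ : ∃ M, p = 2 * n * M + 1 := by
    refine ⟨p / (2 * n), ?_⟩
    have := Nat.div_add_mod p (2 * n)
    rw [hpn] at this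
    rw [show 2 * n * (p / (2 * n)) = 2 * n * (p / (2 * n)) from rfl]
    omega
  have hM : 1 ≤ M := by
    rcases Nat.eq_zero_or_pos M with h0 | h1
    · rw [h0, Nat.mul_zero] at hP; omega
    · exact h1
  obtain ⟨w, hw', hP'⟩ : ∃ w, w = n * M ∧ p = 2 * w + 1 := ⟨n * M, rfl, by rw [hP]; ring⟩
  have hw2 : 2 * M ≤ w := by rw [hw']; exact Nat.mul_le_mul_right M hn
  have hwn : n ≤ w := by rw [hw']; exact Nat.le_mul_of_pos_right n hM
  obtain ⟨u, hu⟩ : ∃ u, u + 3 = 2 * n := ⟨2 * n - 3, by omega⟩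
  have hu' : 2 * n - 3 = u := by omega
  have huM : u * M + 3 * M = 2 * w := by
    calc u * M + 3 * M = (u + 3) * M := by ring
    _ = 2 * n * M := by rw [hu]
    _ = 2 * w := by rw [hw']; ring
  -- the index simplification
  have h2M : (p - 1) / n + 1 = 2 * M + 1 := by
    have e1 : p - 1 = n * (2 * M) := by
      rw [hP, Nat.add_sub_cancel]; ring
    rw [e1, Nat.mul_div_cancel_left _ (by omega : 0 < n)]
  rw [h2M]
  -- express the difference as a sum over Ico
  have hdiff : (∑ k ∈ Finset.range p, (tt n k : ℚ_[p])) - (∑ k ∈ Finset.range (2 * M + 1), tt n k)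
      = ∑ k ∈ Finset.Ico (2 * M + 1) p, tt n k := by
    rw [Finset.sum_Ico_eq_sub _ (by omega : 2 * M + 1 ≤ p)]
  have hp0R : (0 : ℝ) < (p : ℝ) := by exact_mod_cast hprime.out.pos
  have hq0 : (0 : ℝ) < (p : ℝ)⁻¹ := by positivity
  -- the key bound
  have hbound : ‖∑ k ∈ Finset.Ico (2 * M + 1) p, (tt n k : ℚ_[p])‖ ≤ ((p : ℝ)⁻¹) ^ 4 := by
    have hBsub : Finset.Ico (5 * M + 1) (u * M + 1) ⊆ Finset.Ico (2 * M + 1) p := by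
      intro k hk
      rw [Finset.mem_Ico] at *
      omega
    rw [← Finset.sum_sdiff hBsub]
    refine le_trans (IsUltrametricDist.norm_add_le_max _ _) (max_le ?_ ?_)
    · -- good terms
      apply IsUltrametricDist.norm_sum_le_of_forall_le_of_nonneg (by positivity)
      intro k hk
      rw [Finset.mem_sdiff, Finset.mem_Ico, Finset.mem_Ico] at hk
      exact norm_tt_le hP hn hM hp (by omega) (by omega) (by rw [hu']; omega)
    · -- paired terms
      rcases Finset.eq_empty_or_nonempty (Finset.Ico (5 * M + 1) (u * M + 1)) with he | hne
      · rw [he, Finset.sum_empty, norm_zero]; positivity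
      · obtain ⟨k0, hk0⟩ := hne
        rw [Finset.mem_Ico] at hk0
        have h4M : 4 * M < w := by omega
        have hsplit : Finset.Ico (5 * M + 1) (u * M + 1)
            = Finset.Ico (5 * M + 1) (w + M + 1) ∪ Finset.Ico (w + M + 1) (u * M + 1) :=
          (Finset.Ico_union_Ico_eq_Ico (by omega) (by omega)).symm
        rw [hsplit, Finset.sum_union (Finset.Ico_disjoint_Ico_consecutive _ _ _)]
        have hreindex : (∑ k ∈ Finset.Ico (w + M + 1) (u * M + 1), (tt n k : ℚ_[p]))
            = ∑ k ∈ Finset.Ico (5 * M + 1) (w + M + 1), tt n (p + 2 * M - k) := by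
          apply Finset.sum_nbij' (fun k => p + 2 * M - k) (fun k => p + 2 * M - k)
          · intro a ha; rw [Finset.mem_Ico] at *; omega
          · intro a ha; rw [Finset.mem_Ico] at *; omega
          · intro a ha; rw [Finset.mem_Ico] at ha; omega
          · intro a ha; rw [Finset.mem_Ico] at ha; omega
          · intro a ha
            rw [Finset.mem_Ico] at ha
            rw [show p + 2 * M - (p + 2 * M - a) = a by omega]
        rw [hreindex, ← Finset.sum_add_distrib]
        apply IsUltrametricDist.norm_sum_le_of_forall_le_of_nonneg (by positivity)
        intro k hk
        rw [Finset.mem_Ico] at hk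
        exact pair_bound hP hn hM hp (by omega) (by omega) (by rw [hu']; omega)
  -- construct z
  have hp4 : ((p : ℚ_[p]) ^ 4) ≠ 0 := by
    apply pow_ne_zero
    exact_mod_cast hprime.out.ne_zero
  refine ⟨⟨(∑ k ∈ Finset.Ico (2 * M + 1) p, (tt n k : ℚ_[p])) / (p : ℚ_[p]) ^ 4, ?_⟩, ?_⟩
  · rw [norm_div, norm_pow, Padic.norm_p]
    rw [div_le_one (by positivity)]
    simpa using hbound
  · show _ = (p : ℚ_[p]) ^ 4 * ((∑ k ∈ Finset.Ico (2 * M + 1) p, (tt n k : ℚ_[p])) / (p : ℚ_[p]) ^ 4)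
    rw [mul_comm ((p : ℚ_[p]) ^ 4), div_mul_cancel₀ _ hp4]
    exact hdiff
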